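/- Let Z ~ N(0, Σ) with Σ positive definite, and let T = E[sign(Z)sign(Z)ᵀ]. Then T ⪰ (2/π)Σ in the positive semidefinite order, and hence λ_min(T) ≥ (2/π)λ_min(Σ). -/

import Mathlib

open Matrix Real

namespace Stmt17Aux

variable {n : Type*} [Fintype n] [DecidableEq n]

lemma qf_expand (M : Matrix n n ℝ) (x : n → ℝ) :
    x ⬝ᵥ M.mulVec x = ∑ i, ∑ j, x i * M i j * x j := by
  simp [dotProduct, mulVec, Finset.mul_sum, mul_assoc]

lemma psd_def (M : Matrix n n ℝ) (hsym : ∀ i j, M i j = M j i)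
    (h : ∀ x : n → ℝ, 0 ≤ ∑ i, ∑ j, x i * M i j * x j) : M.PosSemidef := by
  constructor
  · ext i j
    simpa using (hsym j i)
  · intro x
    simpa [Finsupp.sum_fintype] using h x

lemma psd_entry_symm {M : Matrix n n ℝ} (h : M.PosSemidef) (i j : n) : M i j = M j i := by
  have := congrFun (congrFun h.1 i) j
  simpa using this.symm

lemma psd_qf_nonneg {M : Matrix n n ℝ} (h : M.PosSemidef) (x : n → ℝ) :
    0 ≤ ∑ i, ∑ j, x i * M i j * x j := by
  have := h.dotProduct_mulVec_nonneg x
  simpa [qf_expand] using this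


lemma psd_hadamard {A B : Matrix n n ℝ} (hA : A.PosSemidef) (hB : B.PosSemidef) :
    (Matrix.of fun i j => A i j * B i j).PosSemidef := by
  exact hA.hadamard hB

lemma psd_smul {A : Matrix n n ℝ} (hA : A.PosSemidef) {c : ℝ} (hc : 0 ≤ c) :
    (c • A).PosSemidef := by
  apply psd_def
  · intro i j
    simp [psd_entry_symm hA i j]
  · intro x
    have := psd_qf_nonneg hA x
    calc (0:ℝ) ≤ c * ∑ i, ∑ j, x i * A i j * x j := mul_nonneg hc this
      _ = ∑ i, ∑ j, x i * (c • A) i j * x j := by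
          simp [Finset.mul_sum]; exact Finset.sum_congr rfl fun i _ =>
            Finset.sum_congr rfl fun j _ => by ring

lemma psd_hpow {A : Matrix n n ℝ} (hA : A.PosSemidef) (m : ℕ) :
    (Matrix.of fun i j => A i j ^ m).PosSemidef := by
  induction m with
  | zero =>
    apply psd_def
    · intro i j; simp
    · intro x
      simp only [Matrix.of_apply, pow_zero, mul_one]
      rw [← Finset.sum_mul_sum]
      exact mul_self_nonneg _
  | succ m ih =>
    have := psd_hadamard ih hA
    apply psd_def
    · intro i j; simp [psd_entry_symm hA i j]
    · intro x
      have h := psd_qf_nonneg this x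
      simpa [pow_succ] using h

lemma psd_of_hasSum (f : ℕ → Matrix n n ℝ) (M : Matrix n n ℝ)
    (hf : ∀ k, (f k).PosSemidef) (h : ∀ i j, HasSum (fun k => f k i j) (M i j)) :
    M.PosSemidef := by
  apply psd_def
  · intro i j
    refine HasSum.unique (h i j) ?_
    have := h j i
    convert this using 2 with k
    exact psd_entry_symm (hf k) i j
  · intro x
    have H : HasSum (fun k => ∑ i, ∑ j, x i * f k i j * x j)
        (∑ i, ∑ j, x i * M i j * x j) := by
      refine hasSum_sum (fun i _ => ?_)
      refine hasSum_sum (fun j _ => ?_)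
      exact ((h i j).mul_left (x i)).mul_right (x j)
    exact hasSum_le (fun k => psd_qf_nonneg (hf k) x) hasSum_zero H


variable {Sig : Matrix n n ℝ}

lemma abs_entry_le_one (hs : Sig.PosSemidef) (hdiag : ∀ i, Sig i i = 1) (i j : n) :
    |Sig i j| ≤ 1 := by
  rcases eq_or_ne i j with rfl | hij
  · simp [hdiag i]
  · have hsym := psd_entry_symm hs i j
    rw [abs_le]
    constructor
    · have h := hs.dotProduct_mulVec_nonneg (Pi.single i (1:ℝ) + Pi.single j 1)
      simp only [star_trivial, Matrix.mulVec_add, Matrix.mulVec_single, dotProduct_add,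
        add_dotProduct, single_dotProduct, mul_one, one_mul, MulOpposite.op_one, one_smul,
        Matrix.col_apply] at h
      rw [hdiag i, hdiag j] at h
      linarith [h]
    · have h := hs.dotProduct_mulVec_nonneg (Pi.single i (1:ℝ) - Pi.single j 1)
      simp only [star_trivial, Matrix.mulVec_sub, Matrix.mulVec_single, dotProduct_sub,
        sub_dotProduct, single_dotProduct, mul_one, one_mul, MulOpposite.op_one, one_smul,
        Matrix.col_apply] at h
      rw [hdiag i, hdiag j] at h
      linarith [h]

lemma deriv_step (hs : Sig.PosSemidef) (hdiag : ∀ i, Sig i i = 1) (x : n → ℝ)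
    {t : ℝ} (ht : t ∈ Set.Ioo (0:ℝ) 1) :
    x ⬝ᵥ Sig.mulVec x ≤
      ∑ i, ∑ j, (x i * x j) * (1 / Real.sqrt (1 - (t * Sig i j) ^ 2) * Sig i j) := by
  obtain ⟨ht0, ht1⟩ := ht
  have hb : ∀ i j : n, |Sig i j| ≤ 1 := abs_entry_le_one hs hdiag
  have hv : ∀ i j : n, 0 < 1 - t ^ 2 * Sig i j ^ 2 := by
    intro i j
    have h1 : Sig i j ^ 2 ≤ 1 := by
      have := hb i j
      nlinarith [abs_nonneg (Sig i j), sq_abs (Sig i j)]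
    nlinarith
  -- the matrix N(t)
  set Nt : Matrix n n ℝ := Matrix.of fun i j => (1/2) * -Real.log (1 - t ^ 2 * Sig i j ^ 2)
    with hNtdef
  have hNt : Nt.PosSemidef := by
    apply psd_of_hasSum
      (fun k => ((1/2) * (t ^ 2) ^ (k+1) / ((k:ℝ)+1)) •
        Matrix.of (fun i j => Sig i j ^ (2*(k+1))))
    · intro k
      exact psd_smul (psd_hpow hs _) (by positivity)
    · intro i j
      have habs : |t ^ 2 * Sig i j ^ 2| < 1 := by
        rw [abs_of_nonneg (by positivity)]
        nlinarith [hv i j]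
      have h := (hasSum_pow_div_log_of_abs_lt_one habs).mul_left (1/2)
      convert h using 2 with k
      case e'_3 => rfl
      simp only [Matrix.smul_apply, Matrix.of_apply, smul_eq_mul]
      rw [mul_pow, pow_mul]
      ring
      case e'_6 => rfl
  -- the matrix E(t) = exp∘N(t) - 1
  have hEt : (Matrix.of fun i j => Real.exp (Nt i j) - 1).PosSemidef := by
    apply psd_of_hasSum
      (fun k => (1 / ((k+1).factorial : ℝ)) • Matrix.of (fun i j => Nt i j ^ (k+1)))
    · intro k
      exact psd_smul (psd_hpow hNt _) (by positivity)
    · intro i j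
      have h : HasSum (fun k => Nt i j ^ k / (k.factorial : ℝ)) (Real.exp (Nt i j)) := by
        rw [Real.exp_eq_exp_ℝ]
        exact NormedSpace.expSeries_div_hasSum_exp (Nt i j)
      have h2 := (hasSum_nat_add_iff' (f := fun k => Nt i j ^ k / (k.factorial : ℝ)) 1).mpr h
      simp only [Finset.range_one, Finset.sum_singleton, pow_zero, Nat.factorial_zero,
        Nat.cast_one, div_one] at h2
      convert h2 using 2 with k
      case e'_3 => rfl
      simp only [Matrix.smul_apply, Matrix.of_apply, smul_eq_mul]
      ring
      case e'_6 => rfl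
  have hCt := psd_hadamard hs hEt
  -- entrywise identity
  have hid : ∀ i j : n, Sig i j * (Real.exp (Nt i j) - 1)
      = 1 / Real.sqrt (1 - (t * Sig i j) ^ 2) * Sig i j - Sig i j := by
    intro i j
    have hvij := hv i j
    have h3 : Real.exp (Real.log (1 - t ^ 2 * Sig i j ^ 2) / 2) ^ 2
        = 1 - t ^ 2 * Sig i j ^ 2 := by
      rw [sq, ← Real.exp_add, add_halves, Real.exp_log hvij]
    have h4 : Real.sqrt (1 - (t * Sig i j) ^ 2)
        = Real.exp (Real.log (1 - t ^ 2 * Sig i j ^ 2) / 2) := by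
      rw [mul_pow]
      conv_lhs => rw [← h3]
      rw [Real.sqrt_sq (Real.exp_pos _).le]
    have h5 : Real.exp (Nt i j) = 1 / Real.sqrt (1 - (t * Sig i j) ^ 2) := by
      rw [h4, hNtdef]
      simp only [Matrix.of_apply]
      rw [show (1/2 : ℝ) * -Real.log (1 - t ^ 2 * Sig i j ^ 2)
            = -(Real.log (1 - t ^ 2 * Sig i j ^ 2) / 2) by ring,
          Real.exp_neg, one_div]
    rw [h5]; ring
  have hq := psd_qf_nonneg hCt x
  have heq : ∑ i, ∑ j, x i * (Matrix.of fun i j => Sig i j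
        * ((Matrix.of fun i j => Real.exp (Nt i j) - 1) i j)) i j * x j
      = (∑ i, ∑ j, (x i * x j) * (1 / Real.sqrt (1 - (t * Sig i j) ^ 2) * Sig i j))
        - ∑ i, ∑ j, x i * Sig i j * x j := by
    rw [← Finset.sum_sub_distrib]
    refine Finset.sum_congr rfl fun i _ => ?_
    rw [← Finset.sum_sub_distrib]
    refine Finset.sum_congr rfl fun j _ => ?_
    simp only [Matrix.of_apply]
    rw [hid i j]
    ring
  rw [heq] at hq
  rw [qf_expand]
  linarith [hq]

lemma arcsin_qf (hs : Sig.PosSemidef) (hdiag : ∀ i, Sig i i = 1) (x : n → ℝ) :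
    x ⬝ᵥ Sig.mulVec x ≤ ∑ i, ∑ j, (x i * x j) * Real.arcsin (Sig i j) := by
  set q := x ⬝ᵥ Sig.mulVec x with hq
  set g : ℝ → ℝ := fun t => (∑ i, ∑ j, (x i * x j) * Real.arcsin (t * Sig i j)) - t * q
    with hg
  have hb : ∀ i j : n, |Sig i j| ≤ 1 := abs_entry_le_one hs hdiag
  have hderiv : ∀ t ∈ Set.Ioo (0:ℝ) 1, HasDerivAt g
      ((∑ i, ∑ j, (x i * x j) * (1 / Real.sqrt (1 - (t * Sig i j) ^ 2) * Sig i j)) - q) t := by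
    intro t ht
    have habs : ∀ i j : n, |t * Sig i j| < 1 := by
      intro i j
      rw [abs_mul, abs_of_pos ht.1]
      calc t * |Sig i j| ≤ t * 1 := by
            exact mul_le_mul_of_nonneg_left (hb i j) ht.1.le
        _ < 1 := by linarith [ht.2]
    have h1 : HasDerivAt (fun t => ∑ i, ∑ j, (x i * x j) * Real.arcsin (t * Sig i j))
        (∑ i, ∑ j, (x i * x j) * (1 / Real.sqrt (1 - (t * Sig i j) ^ 2) * Sig i j)) t := by
      apply HasDerivAt.fun_sum
      intro i _
      apply HasDerivAt.fun_sum
      intro j _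
      have hne1 : t * Sig i j ≠ -1 := by
        intro h
        have := habs i j
        rw [h] at this; simp at this
      have hne2 : t * Sig i j ≠ 1 := by
        intro h
        have := habs i j
        rw [h] at this; simp at this
      exact ((Real.hasDerivAt_arcsin hne1 hne2).comp t
        (hasDerivAt_mul_const (Sig i j))).const_mul (x i * x j)
    exact h1.sub (hasDerivAt_mul_const q)
  have hcont : Continuous g := by
    apply Continuous.sub
    · apply continuous_finset_sum
      intro i _
      apply continuous_finset_sum
      intro j _
      exact continuous_const.mul
        (Real.continuous_arcsin.comp (continuous_id.mul continuous_const))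
    · exact continuous_id.mul continuous_const
  have hmono : MonotoneOn g (Set.Icc 0 1) := by
    apply monotoneOn_of_deriv_nonneg (convex_Icc 0 1) hcont.continuousOn
    · intro t ht
      rw [interior_Icc] at ht
      exact (hderiv t ht).differentiableAt.differentiableWithinAt
    · intro t ht
      rw [interior_Icc] at ht
      rw [(hderiv t ht).deriv]
      have := deriv_step hs hdiag x ht
      rw [← hq] at this
      linarith
  have h01 := hmono (Set.mem_Icc.mpr ⟨le_refl 0, zero_le_one⟩)
    (Set.mem_Icc.mpr ⟨zero_le_one, le_refl 1⟩) zero_le_one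
  have hg0 : g 0 = 0 := by simp [hg]
  have hg1 : g 1 = (∑ i, ∑ j, (x i * x j) * Real.arcsin (Sig i j)) - q := by
    simp [hg]
  rw [hg0, hg1] at h01
  linarith


end Stmt17Aux

open Stmt17Aux in
/-- If `Σ` is a positive definite correlation matrix and `T_{ij} = (2/π)arcsin(Σ_{ij})`
(the Kendall's tau matrix of a Gaussian `N(0,Σ)`), then `T ⪰ (2/π)Σ` in the PSD order,
and hence `λ_min(T) ≥ (2/π)λ_min(Σ)`. -/
theorem stmt17 (p : ℕ) (Sig : Matrix (Fin p) (Fin p) ℝ) (hpd : Sig.PosDef)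
    (hdiag : ∀ i, Sig i i = 1)
    (T : Matrix (Fin p) (Fin p) ℝ)
    (hT : ∀ i j, T i j = 2 / Real.pi * Real.arcsin (Sig i j)) :
    (T - (2 / Real.pi) • Sig).PosSemidef ∧
      ∀ c : ℝ, (∀ x : Fin p → ℝ, c * ∑ i, (x i) ^ 2 ≤ x ⬝ᵥ Sig.mulVec x) →
        ∀ x : Fin p → ℝ, 2 / Real.pi * c * ∑ i, (x i) ^ 2 ≤ x ⬝ᵥ T.mulVec x := by
  have hs : Sig.PosSemidef := hpd.posSemidef
  have hpi : (0:ℝ) < 2 / Real.pi := by positivity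
  have hmain : (T - (2 / Real.pi) • Sig).PosSemidef := by
    apply psd_def
    · intro i j
      simp only [Matrix.sub_apply, Matrix.smul_apply, smul_eq_mul, hT,
        psd_entry_symm hs i j]
    · intro x
      have hkey := arcsin_qf hs hdiag x
      rw [qf_expand] at hkey
      have heq : ∑ i, ∑ j, x i * (T - (2 / Real.pi) • Sig) i j * x j
          = 2 / Real.pi * ((∑ i, ∑ j, (x i * x j) * Real.arcsin (Sig i j))
              - ∑ i, ∑ j, x i * Sig i j * x j) := by
        rw [mul_sub, Finset.mul_sum, Finset.mul_sum, ← Finset.sum_sub_distrib]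
        refine Finset.sum_congr rfl fun i _ => ?_
        rw [Finset.mul_sum, Finset.mul_sum, ← Finset.sum_sub_distrib]
        refine Finset.sum_congr rfl fun j _ => ?_
        simp only [Matrix.sub_apply, Matrix.smul_apply, smul_eq_mul, hT]
        ring
      rw [heq]
      have := sub_nonneg.mpr hkey
      positivity
  refine ⟨hmain, ?_⟩
  intro c hc x
  have h1 : 0 ≤ x ⬝ᵥ (T - (2 / Real.pi) • Sig).mulVec x := by
    have := hmain.dotProduct_mulVec_nonneg x
    simpa using this
  have h2 : x ⬝ᵥ T.mulVec x
      = x ⬝ᵥ (T - (2 / Real.pi) • Sig).mulVec x + 2 / Real.pi * (x ⬝ᵥ Sig.mulVec x) := by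
    rw [Matrix.sub_mulVec, dotProduct_sub, Matrix.smul_mulVec, dotProduct_smul,
      smul_eq_mul]
    ring
  have h3 : 2 / Real.pi * (c * ∑ i, (x i) ^ 2) ≤ 2 / Real.pi * (x ⬝ᵥ Sig.mulVec x) :=
    mul_le_mul_of_nonneg_left (hc x) hpi.le
  rw [h2]
  calc 2 / Real.pi * c * ∑ i, (x i) ^ 2 = 2 / Real.pi * (c * ∑ i, (x i) ^ 2) := by ring
    _ ≤ 2 / Real.pi * (x ⬝ᵥ Sig.mulVec x) := h3
    _ ≤ x ⬝ᵥ (T - (2 / Real.pi) • Sig).mulVec x + 2 / Real.pi * (x ⬝ᵥ Sig.mulVec x) := by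
        linarith
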